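/- There do not exist x, y, z ∈ 𝔽₂(t) such that y² + y·z + z² = f(x)·g(x). (This is an explicit instance of the paper's main theorem: the Châtelet surface given by y² + yz + γz² = f(x)g(x) over a global field of characteristic 2 has no rational points, the failure being explained by a Brauer–Manin obstruction.) -/

import Mathlib

open Polynomial UniqueFactorizationMonoid

noncomputable section ChateletAux

/-- The polynomial `a = X⁴ + X³ + 1` over `𝔽₂`. -/
abbrev AP : Polynomial (ZMod 2) := X^4 + X^3 + 1

lemma monic_of_ne_zero {c : Polynomial (ZMod 2)} (hc : c ≠ 0) : c.Monic := by
  have h := Polynomial.leadingCoeff_ne_zero.mpr hc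
  unfold Polynomial.Monic
  revert h
  generalize c.leadingCoeff = a
  revert a
  decide

lemma normalize_eq_self' {c : Polynomial (ZMod 2)} (hc : c ≠ 0) : normalize c = c :=
  (monic_of_ne_zero hc).normalize_eq_self

lemma sq_eq_expand (B : Polynomial (ZMod 2)) : B^2 = expand (ZMod 2) 2 B := by
  have h := Polynomial.map_frobenius_expand 2 B
  have hfr : frobenius (ZMod 2) 2 = RingHom.id (ZMod 2) := by
    ext x; revert x; decide
  rw [hfr, Polynomial.map_id] at h
  exact h.symm

lemma coeff_sq (B : Polynomial (ZMod 2)) (i : ℕ) : (B^2).coeff (2*i) = (B.coeff i)^2 := by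
  rw [sq_eq_expand, Polynomial.coeff_expand (by norm_num)]
  simp [Nat.mul_div_cancel_left]

lemma coeff_mul_top (B C : Polynomial (ZMod 2)) (μ : ℕ) (hB : B.natDegree ≤ μ) (hC : C.natDegree ≤ μ) :
    (B*C).coeff (2*μ) = B.coeff μ * C.coeff μ := by
  rw [Polynomial.coeff_mul]
  rw [Finset.sum_eq_single (μ, μ)]
  · intro b hb hne
    rcases Finset.HasAntidiagonal.mem_antidiagonal.mp hb with h
    rcases lt_or_ge μ b.1 with h1 | h1
    · have : B.coeff b.1 = 0 := Polynomial.coeff_eq_zero_of_natDegree_lt (lt_of_le_of_lt hB h1)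
      simp [this]
    · have h2 : μ ≤ b.2 := by omega
      have h2' : μ < b.2 := by
        rcases lt_or_eq_of_le h2 with h | h
        · exact h
        · exfalso; apply hne; have : b.1 = μ := by omega
          exact Prod.ext this h.symm
      have : C.coeff b.2 = 0 := Polynomial.coeff_eq_zero_of_natDegree_lt (lt_of_le_of_lt hC h2')
      simp [this]
  · intro h
    exfalso; apply h; exact Finset.HasAntidiagonal.mem_antidiagonal.mpr (by omega)

/-- Leading behaviour of the norm form `B² + BC + C²` over `𝔽₂[t]`. -/
lemma lead (B C : Polynomial (ZMod 2)) (h : ¬(B = 0 ∧ C = 0)) :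
    (B^2 + B*C + C^2) ≠ 0 ∧
    (B^2 + B*C + C^2).natDegree = 2 * max B.natDegree C.natDegree := by
  set μ := max B.natDegree C.natDegree with hμ
  have hB : B.natDegree ≤ μ := le_max_left _ _
  have hC : C.natDegree ≤ μ := le_max_right _ _
  have hcoeff : (B^2 + B*C + C^2).coeff (2*μ) = 1 := by
    rw [Polynomial.coeff_add, Polynomial.coeff_add, coeff_sq, coeff_sq,
      coeff_mul_top B C μ hB hC]
    have hbc : B.coeff μ ≠ 0 ∨ C.coeff μ ≠ 0 := by
      rcases eq_or_ne B 0 with hB0 | hB0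
      · right
        have hC0 : C ≠ 0 := fun hc => h ⟨hB0, hc⟩
        have : μ = C.natDegree := by
          simp [hμ, hB0]
        rw [this]
        exact Polynomial.leadingCoeff_ne_zero.mpr hC0
      · rcases le_or_gt C.natDegree B.natDegree with hle | hlt
        · left
          have : μ = B.natDegree := by omega
          rw [this]
          exact Polynomial.leadingCoeff_ne_zero.mpr hB0
        · right
          have hC0 : C ≠ 0 := by
            intro hc
            rw [hc] at hlt; simp at hlt
          have : μ = C.natDegree := by omega
          rw [this]
          exact Polynomial.leadingCoeff_ne_zero.mpr hC0
    revert hbc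
    generalize B.coeff μ = b
    generalize C.coeff μ = c
    revert b c
    decide
  have hne : (B^2 + B*C + C^2) ≠ 0 := by
    intro h0
    rw [h0] at hcoeff
    simp at hcoeff
  refine ⟨hne, ?_⟩
  have hle : (B^2 + B*C + C^2).natDegree ≤ 2*μ := by
    refine le_trans (Polynomial.natDegree_add_le _ _) ?_
    refine max_le (le_trans (Polynomial.natDegree_add_le _ _) (max_le ?_ ?_)) ?_
    · calc (B^2).natDegree ≤ 2 * B.natDegree := Polynomial.natDegree_pow_le
        _ ≤ 2*μ := by omega
    · calc (B*C).natDegree ≤ B.natDegree + C.natDegree := Polynomial.natDegree_mul_le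
        _ ≤ 2*μ := by omega
    · calc (C^2).natDegree ≤ 2 * C.natDegree := Polynomial.natDegree_pow_le
        _ ≤ 2*μ := by omega
  have hge : 2*μ ≤ (B^2 + B*C + C^2).natDegree := by
    apply Polynomial.le_natDegree_of_ne_zero
    rw [hcoeff]; exact one_ne_zero
  omega

/-- `X² + X + 1` has no root in an odd-degree extension of `𝔽₂`. -/
lemma no_omega (p : Polynomial (ZMod 2)) (hp : Irreducible p) (hd : Odd p.natDegree)
    (ξ : AdjoinRoot p) : ξ^2 + ξ + 1 ≠ 0 := by
  haveI : Fact (Irreducible p) := ⟨hp⟩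
  intro h0
  have hp0 : p ≠ 0 := hp.ne_zero
  haveI : CharP (AdjoinRoot p) 2 :=
    charP_of_injective_algebraMap (algebraMap (ZMod 2) (AdjoinRoot p)).injective 2
  haveI : Module.Finite (ZMod 2) (AdjoinRoot p) := (AdjoinRoot.powerBasis hp0).finite
  haveI : Finite (AdjoinRoot p) := Module.finite_of_finite (ZMod 2)
  haveI : Fintype (AdjoinRoot p) := Fintype.ofFinite _
  have hcard : Fintype.card (AdjoinRoot p) = 2 ^ p.natDegree := by
    have h1 : Fintype.card (AdjoinRoot p) = Fintype.card (ZMod 2) ^ Module.finrank (ZMod 2) (AdjoinRoot p) :=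
      Module.card_eq_pow_finrank
    rw [h1, ZMod.card]
    congr 1
    rw [(AdjoinRoot.powerBasis hp0).finrank, AdjoinRoot.powerBasis_dim]
  have two0 : (2 : AdjoinRoot p) = 0 := by
    have := CharP.cast_eq_zero (AdjoinRoot p) 2; exact_mod_cast this
  have hξ0 : ξ ≠ 0 := by
    intro h; rw [h] at h0; simp at h0
  have hξ1 : ξ ≠ 1 := by
    intro h; rw [h] at h0
    have : (3 : AdjoinRoot p) = 0 := by linear_combination h0
    have h2 : (1 : AdjoinRoot p) = 0 := by linear_combination this - two0
    exact one_ne_zero h2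
  have hcube : ξ^3 = 1 := by linear_combination (ξ - 1) * h0
  set u : (AdjoinRoot p)ˣ := Units.mk0 ξ hξ0 with hu
  have hu3 : u^3 = 1 := by
    ext
    push_cast
    exact hcube
  have hu1 : u ≠ 1 := by
    intro h
    apply hξ1
    have : (u : AdjoinRoot p) = 1 := by rw [h]; rfl
    simpa [hu] using this
  have hord : orderOf u = 3 := by
    have hdvd : orderOf u ∣ 3 := orderOf_dvd_of_pow_eq_one hu3
    rcases (Nat.prime_three.eq_one_or_self_of_dvd _ hdvd) with h | h
    · exact absurd (orderOf_eq_one_iff.mp h) hu1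
    · exact h
  have hdiv : orderOf u ∣ Fintype.card (AdjoinRoot p)ˣ := orderOf_dvd_card
  rw [hord, Fintype.card_units, hcard] at hdiv
  obtain ⟨k, hk⟩ := hd
  rw [hk] at hdiv
  have hpow : ∀ j : ℕ, 2^(2*j+1) % 3 = 2 := by
    intro j
    induction j with
    | zero => rfl
    | succ n ih =>
      have h2 : 2*(n+1)+1 = (2*n+1)+2 := by ring
      rw [h2, pow_add, Nat.mul_mod, ih]; rfl
  have hge : 1 ≤ 2^(2*k+1) := Nat.one_le_two_pow
  have := hpow k
  set N := 2^(2*k+1)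
  omega

/-- Descent: any odd-degree prime divides a value of the norm form to even order. -/
lemma even_count (p : Polynomial (ZMod 2)) (hp : Irreducible p) (hd : Odd p.natDegree) :
    ∀ (n : ℕ) (B C : Polynomial (ZMod 2)), ¬(B = 0 ∧ C = 0) →
      (B^2 + B*C + C^2).natDegree = n →
      Even ((normalizedFactors (B^2 + B*C + C^2)).count p) := by
  intro n
  induction n using Nat.strong_induction_on with
  | _ n ih =>
    intro B C hBC hdeg
    obtain ⟨hE0, hEdeg⟩ := lead B C hBC
    by_cases hdvd : p ∣ (B^2 + B*C + C^2)
    · have hmk : (AdjoinRoot.mk p) (B^2 + B*C + C^2) = 0 := (AdjoinRoot.mk_eq_zero).mpr hdvd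
      haveI : Fact (Irreducible p) := ⟨hp⟩
      have hmk' : (AdjoinRoot.mk p B)^2 + (AdjoinRoot.mk p B) * (AdjoinRoot.mk p C)
          + (AdjoinRoot.mk p C)^2 = 0 := by
        rw [← map_pow, ← map_mul, ← map_pow, ← map_add, ← map_add]
        exact hmk
      have hC : AdjoinRoot.mk p C = 0 := by
        by_contra hC0
        apply no_omega p hp hd ((AdjoinRoot.mk p B) * (AdjoinRoot.mk p C)⁻¹)
        have hinv : (AdjoinRoot.mk p C) * (AdjoinRoot.mk p C)⁻¹ = 1 := mul_inv_cancel₀ hC0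
        linear_combination ((AdjoinRoot.mk p C)⁻¹)^2 * hmk'
          - ((AdjoinRoot.mk p B) * (AdjoinRoot.mk p C)⁻¹
             + (AdjoinRoot.mk p C) * (AdjoinRoot.mk p C)⁻¹ + 1) * hinv
      have hB : AdjoinRoot.mk p B = 0 := by
        rw [hC] at hmk'
        have : (AdjoinRoot.mk p B)^2 = 0 := by linear_combination hmk'
        exact pow_eq_zero_iff (n := 2) (by norm_num) |>.mp this
      obtain ⟨B₁, rfl⟩ := (AdjoinRoot.mk_eq_zero).mp hB
      obtain ⟨C₁, rfl⟩ := (AdjoinRoot.mk_eq_zero).mp hC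
      have hp0 : p ≠ 0 := hp.ne_zero
      have hBC₁ : ¬(B₁ = 0 ∧ C₁ = 0) := by
        rintro ⟨rfl, rfl⟩
        simp at hBC
      obtain ⟨hE10, hE1deg⟩ := lead B₁ C₁ hBC₁
      have hfact : (p*B₁)^2 + (p*B₁)*(p*C₁) + (p*C₁)^2 = p^2 * (B₁^2 + B₁*C₁ + C₁^2) := by
        ring
      have hdegp : 1 ≤ p.natDegree := by
        rcases hd with ⟨k, hk⟩; omega
      have hn : n = 2 * p.natDegree + (B₁^2 + B₁*C₁ + C₁^2).natDegree := by
        rw [← hdeg, hfact, Polynomial.natDegree_mul (pow_ne_zero 2 hp0) hE10,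
          Polynomial.natDegree_pow]
      have hlt : (B₁^2 + B₁*C₁ + C₁^2).natDegree < n := by omega
      have hcount : (normalizedFactors ((p*B₁)^2 + (p*B₁)*(p*C₁) + (p*C₁)^2)).count p
          = 2 + (normalizedFactors (B₁^2 + B₁*C₁ + C₁^2)).count p := by
        rw [hfact, normalizedFactors_mul (pow_ne_zero 2 hp0) hE10, Multiset.count_add,
          normalizedFactors_pow, normalizedFactors_irreducible hp, normalize_eq_self' hp0]
        simp
      rw [hcount]
      obtain ⟨k, hk⟩ := ih _ hlt B₁ C₁ hBC₁ rfl
      exact ⟨k+1, by omega⟩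
    · have : p ∉ normalizedFactors (B^2 + B*C + C^2) := by
        intro hmem
        exact hdvd (dvd_of_mem_normalizedFactors hmem)
      rw [Multiset.count_eq_zero_of_notMem this]
      exact Even.zero

lemma degparity (c : Polynomial (ZMod 2)) (hc : c ≠ 0) :
    (c.natDegree : ZMod 2) = ∑ q ∈ (normalizedFactors c).toFinset,
      ((normalizedFactors c).count q : ZMod 2) * (q.natDegree : ZMod 2) := by
  have hassoc := prod_normalizedFactors hc
  obtain ⟨u, hu⟩ := hassoc
  have hdeg : c.natDegree = ((normalizedFactors c).map Polynomial.natDegree).sum := by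
    conv_lhs => rw [← hu]
    rw [Polynomial.natDegree_mul (by
        intro h
        rw [h, zero_mul] at hu
        exact hc hu.symm) u.ne_zero]
    rw [Polynomial.natDegree_eq_zero_of_isUnit u.isUnit, add_zero]
    rw [Polynomial.natDegree_multiset_prod_of_monic]
    intro f hf
    exact monic_of_ne_zero (irreducible_of_normalized_factor f hf).ne_zero
  rw [hdeg]
  rw [show (((normalizedFactors c).map Polynomial.natDegree).sum : ZMod 2)
      = ((normalizedFactors c).map (fun q => ((q.natDegree : ZMod 2)))).sum by
    rw [Nat.cast_multiset_sum, Multiset.map_map]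
    rfl]
  rw [Finset.sum_multiset_map_count]
  congr 1
  ext q
  rw [nsmul_eq_mul]

lemma natDegree_AP : (AP).natDegree = 4 := by
  unfold AP
  compute_degree!

lemma AP_ne_zero : (AP) ≠ 0 := by
  intro h
  have := natDegree_AP
  rw [h] at this
  simp at this

lemma eval_AP (c : ZMod 2) : (AP).eval c = 1 := by
  simp only [AP, Polynomial.eval_add, Polynomial.eval_pow, Polynomial.eval_X,
    Polynomial.eval_one]
  revert c; decide

/-- `a` has no irreducible factor of odd degree. -/
lemma no_odd_factor_AP (p : Polynomial (ZMod 2)) (hp : Irreducible p) (hd : Odd p.natDegree) :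
    ¬ p ∣ AP := by
  intro hdvd
  obtain ⟨q, hq⟩ := hdvd
  have hq0 : q ≠ 0 := by
    intro h; rw [h, mul_zero] at hq; exact AP_ne_zero hq
  have hdeg : p.natDegree + q.natDegree = 4 := by
    have := natDegree_AP
    rw [hq, Polynomial.natDegree_mul hp.ne_zero hq0] at this
    omega
  have hp1 : 0 < p.natDegree := hp.natDegree_pos
  have h13 : p.natDegree = 1 ∨ p.natDegree = 3 := by
    rcases hd with ⟨k, hk⟩; omega
  have hlin : ∃ ℓ w : Polynomial (ZMod 2), AP = ℓ * w ∧ ℓ.Monic ∧ ℓ.natDegree = 1 := by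
    rcases h13 with h1 | h3
    · exact ⟨p, q, hq, monic_of_ne_zero hp.ne_zero, h1⟩
    · exact ⟨q, p, by rw [hq, mul_comm], monic_of_ne_zero hq0, by omega⟩
  obtain ⟨ℓ, w, hw, hmon, hdeg1⟩ := hlin
  have hXC : ℓ = X + C (ℓ.coeff 0) := hmon.eq_X_add_C hdeg1
  have hroot : (AP).eval (ℓ.coeff 0) = 0 := by
    rw [hw, Polynomial.eval_mul, hXC]
    simp [CharTwo.add_self_eq_zero]
  rw [eval_AP] at hroot
  exact one_ne_zero hroot

lemma even_cast {n : ℕ} (h : Even n) : (n : ZMod 2) = 0 := by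
  obtain ⟨k, rfl⟩ := h
  have h2 : ((2:ℕ) : ZMod 2) = 0 := ZMod.natCast_self 2
  push_cast
  linear_combination (k : ZMod 2) * h2

lemma odd_cast {n : ℕ} (h : Odd n) : (n : ZMod 2) = 1 := by
  obtain ⟨k, rfl⟩ := h
  have h2 : ((2:ℕ) : ZMod 2) = 0 := ZMod.natCast_self 2
  push_cast
  linear_combination (k : ZMod 2) * h2

/-- The main Diophantine statement at the level of polynomials. -/
theorem polymain (r s : Polynomial (ZMod 2)) (hs : s ≠ 0) (hco : IsCoprime r s)
    (B' C' D : Polynomial (ZMod 2)) (hD : D ≠ 0)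
    (heq : B'^2 + B'*C' + C'^2
      = X * (AP^3*r*(r+s) + s^2) * ((AP^3*r*(r+s) + s^2) + AP^3*s^2) * D^2) :
    False := by
  set P : Polynomial (ZMod 2) := AP^3*r*(r+s) + s^2 with hP
  set Q : Polynomial (ZMod 2) := P + AP^3*s^2 with hQ
  have hrs0 : ¬(r.eval 0 = 0 ∧ s.eval 0 = 0) := by
    rintro ⟨hr0, hs0⟩
    obtain ⟨u, v, huv⟩ := hco
    have := congrArg (Polynomial.eval 0) huv
    simp [hr0, hs0] at this
  have hPeval : P.eval 0 = 1 := by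
    have h1 : P.eval 0 = r.eval 0 * (r.eval 0 + s.eval 0) + s.eval 0^2 := by
      rw [hP]; simp
    rw [h1]
    revert hrs0
    generalize r.eval 0 = b
    generalize s.eval 0 = c
    revert b c
    decide
  have hP0 : P ≠ 0 := by
    intro h; rw [h] at hPeval; simp at hPeval
  have hXndvdP : ¬ X ∣ P := by
    rw [Polynomial.X_dvd_iff, Polynomial.coeff_zero_eq_eval_zero, hPeval]
    exact one_ne_zero
  have hM := lead r s (by rintro ⟨rfl, rfl⟩; exact hs rfl)
  set M : Polynomial (ZMod 2) := r^2 + r*s + s^2 with hMdef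
  set μ : ℕ := max r.natDegree s.natDegree with hμ
  have hQM : Q = AP^3 * M + s^2 := by rw [hQ, hP, hMdef]; ring
  have hA3 : (AP^3).natDegree = 12 := by
    rw [Polynomial.natDegree_pow]
    rw [show (AP).natDegree = 4 from natDegree_AP]
  have hA3M : (AP^3 * M).natDegree = 12 + 2*μ := by
    rw [Polynomial.natDegree_mul (pow_ne_zero 3 AP_ne_zero) hM.1, hA3, hM.2]
  have hs2 : (s^2).natDegree < (AP^3*M).natDegree := by
    rw [hA3M, Polynomial.natDegree_pow]
    have : s.natDegree ≤ μ := le_max_right _ _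
    omega
  have hQdeg : Q.natDegree = 12 + 2*μ := by
    rw [hQM, Polynomial.natDegree_add_eq_left_of_natDegree_lt hs2, hA3M]
  have hQ0 : Q ≠ 0 := by
    intro h
    rw [h] at hQdeg
    simp at hQdeg
    omega
  have hRHS0 : X * P * Q * D^2 ≠ 0 :=
    mul_ne_zero (mul_ne_zero (mul_ne_zero Polynomial.X_ne_zero hP0) hQ0) (pow_ne_zero 2 hD)
  have hBC : ¬(B' = 0 ∧ C' = 0) := by
    rintro ⟨rfl, rfl⟩
    apply hRHS0
    rw [← heq]; ring
  have hcount : ∀ p : Polynomial (ZMod 2), Irreducible p → Odd p.natDegree →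
      Even ((normalizedFactors X).count p + (normalizedFactors P).count p
        + (normalizedFactors Q).count p + 2 * (normalizedFactors D).count p) := by
    intro p hp hd
    have := even_count p hp hd _ B' C' hBC rfl
    rw [heq] at this
    rw [normalizedFactors_mul (mul_ne_zero (mul_ne_zero Polynomial.X_ne_zero hP0) hQ0)
        (pow_ne_zero 2 hD),
      normalizedFactors_mul (mul_ne_zero Polynomial.X_ne_zero hP0) hQ0,
      normalizedFactors_mul Polynomial.X_ne_zero hP0,
      normalizedFactors_pow] at this
    simpa [Multiset.count_add, Multiset.count_nsmul, two_mul] using this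
  have hcXP : (normalizedFactors P).count X = 0 := by
    rw [Multiset.count_eq_zero]
    intro hmem
    exact hXndvdP (dvd_of_mem_normalizedFactors hmem)
  have hnfX : normalizedFactors (X : Polynomial (ZMod 2)) = {X} := by
    rw [normalizedFactors_irreducible Polynomial.irreducible_X,
      normalize_eq_self' Polynomial.X_ne_zero]
  have hXodd : Odd (X : Polynomial (ZMod 2)).natDegree := by
    rw [Polynomial.natDegree_X]; exact odd_one
  have hcXQ : Odd ((normalizedFactors Q).count X) := by
    have := hcount X Polynomial.irreducible_X hXodd
    rw [hnfX, hcXP] at this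
    rw [Multiset.count_singleton_self] at this
    rw [Nat.even_iff] at this
    rw [Nat.odd_iff]
    omega
  have hcpQ : ∀ p : Polynomial (ZMod 2), Irreducible p → Odd p.natDegree → p ≠ X →
      Even ((normalizedFactors Q).count p) := by
    intro p hp hd hpX
    have hXcnt : (normalizedFactors X).count p = 0 := by
      rw [hnfX, Multiset.count_singleton, if_neg hpX]
    have hmain := hcount p hp hd
    rw [hXcnt] at hmain
    have hnotboth : ¬(p ∣ P ∧ p ∣ Q) := by
      rintro ⟨hpP, hpQ⟩
      have hprime : Prime p := hp.prime
      have hdvdsum : p ∣ AP^3 * s^2 := by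
        have : AP^3*s^2 = Q - P := by rw [hQ]; ring
        rw [this]
        exact dvd_sub hpQ hpP
      rcases hprime.dvd_mul.mp hdvdsum with h | h
      · exact no_odd_factor_AP p hp hd (hprime.dvd_of_dvd_pow h)
      · have hps : p ∣ s := hprime.dvd_of_dvd_pow h
        have hpr : p ∣ r := by
          have h1 : p ∣ AP^3*r*(r+s) := by
            have : AP^3*r*(r+s) = P - s^2 := by rw [hP]; ring
            rw [this]
            exact dvd_sub hpP (dvd_pow hps two_ne_zero)
          rcases hprime.dvd_mul.mp h1 with h2 | h2
          · rcases hprime.dvd_mul.mp h2 with h3 | h3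
            · exact absurd (hprime.dvd_of_dvd_pow h3) (no_odd_factor_AP p hp hd)
            · exact h3
          · have : p ∣ (r+s) - s := dvd_sub h2 hps
            simpa using this
        exact hp.not_isUnit (hco.isUnit_of_dvd' hpr hps)
    by_cases hpQdvd : p ∣ Q
    · have hpPcnt : (normalizedFactors P).count p = 0 := by
        rw [Multiset.count_eq_zero]
        intro hmem
        exact hnotboth ⟨dvd_of_mem_normalizedFactors hmem, hpQdvd⟩
      rw [hpPcnt] at hmain
      rw [Nat.even_iff] at hmain ⊢
      omega
    · have h0 : (normalizedFactors Q).count p = 0 :=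
        Multiset.count_eq_zero.mpr (fun hmem => hpQdvd (dvd_of_mem_normalizedFactors hmem))
      rw [h0]
      exact Even.zero
  have hfin : ((Q.natDegree : ZMod 2)) = 1 := by
    rw [degparity Q hQ0]
    have hXmem : X ∈ (normalizedFactors Q).toFinset := by
      rw [Multiset.mem_toFinset]
      apply Multiset.count_pos.mp
      rcases hcXQ with ⟨k, hk⟩
      omega
    rw [Finset.sum_eq_single X]
    · rw [odd_cast hcXQ, Polynomial.natDegree_X]
      simp
    · intro q hq hqX
      have hirr : Irreducible q :=
        irreducible_of_normalized_factor q (Multiset.mem_toFinset.mp hq)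
      rcases Nat.even_or_odd q.natDegree with he | ho
      · rw [even_cast he, mul_zero]
      · rw [even_cast (hcpQ q hirr ho hqX), zero_mul]
    · intro h
      exact absurd hXmem h
  rw [hQdeg] at hfin
  have : ((12 + 2*μ : ℕ) : ZMod 2) = 0 := even_cast ⟨6 + μ, by ring⟩
  rw [this] at hfin
  exact zero_ne_one hfin

end ChateletAux

/-- `a = t⁴ + t³ + 1` in `k = 𝔽₂(t)`. -/
noncomputable def aRF : RatFunc (ZMod 2) := RatFunc.X ^ 4 + RatFunc.X ^ 3 + 1

/-- `b = t` in `k = 𝔽₂(t)`. -/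
noncomputable def bRF : RatFunc (ZMod 2) := RatFunc.X

/-- `f(x) = a⁻⁴·b·x² + x + a·b⁻¹`. -/
noncomputable def fRF (x : RatFunc (ZMod 2)) : RatFunc (ZMod 2) :=
  aRF⁻¹ ^ 4 * bRF * x ^ 2 + x + aRF * bRF⁻¹

/-- `g(x) = a⁻⁸·b²·x² + a⁻⁴·b·x + a⁻³ + 1`. -/
noncomputable def gRF (x : RatFunc (ZMod 2)) : RatFunc (ZMod 2) :=
  aRF⁻¹ ^ 8 * bRF ^ 2 * x ^ 2 + aRF⁻¹ ^ 4 * bRF * x + aRF⁻¹ ^ 3 + 1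

/-- The Châtelet surface `y² + yz + z² = f(x)·g(x)` over `𝔽₂(t)` has no rational point. -/
theorem chatelet_no_rational_points :
    ¬ ∃ x y z : RatFunc (ZMod 2), y ^ 2 + y * z + z ^ 2 = fRF x * gRF x := by
  rintro ⟨x, y, z, hxyz⟩
  have haRF : aRF = algebraMap (Polynomial (ZMod 2)) (RatFunc (ZMod 2)) AP := by
    rw [aRF]
    simp only [AP, map_add, map_pow, map_one, RatFunc.algebraMap_X]
  have hbRF : bRF = algebraMap (Polynomial (ZMod 2)) (RatFunc (ZMod 2)) Polynomial.X := by
    rw [bRF, RatFunc.algebraMap_X]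
  have ha : aRF ≠ 0 := by
    rw [haRF]; exact RatFunc.algebraMap_ne_zero AP_ne_zero
  have hb : bRF ≠ 0 := by
    rw [hbRF]; exact RatFunc.algebraMap_ne_zero Polynomial.X_ne_zero
  have haa : aRF * aRF⁻¹ = 1 := mul_inv_cancel₀ ha
  have hbb : bRF * bRF⁻¹ = 1 := mul_inv_cancel₀ hb
  set u : RatFunc (ZMod 2) := aRF⁻¹^4 * bRF * x with hu
  set r : Polynomial (ZMod 2) := u.num with hr
  set s : Polynomial (ZMod 2) := u.denom with hsdef
  have hs : s ≠ 0 := u.denom_ne_zero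
  have hco : IsCoprime r s := u.isCoprime_num_denom
  set ιs : RatFunc (ZMod 2) := algebraMap (Polynomial (ZMod 2)) (RatFunc (ZMod 2)) s with hιs
  set ιr : RatFunc (ZMod 2) := algebraMap (Polynomial (ZMod 2)) (RatFunc (ZMod 2)) r with hιr
  have hS : ιs ≠ 0 := RatFunc.algebraMap_ne_zero hs
  have hss : ιs * ιs⁻¹ = 1 := mul_inv_cancel₀ hS
  have hu' : u = ιr * ιs⁻¹ := by
    rw [hιr, hιs, ← div_eq_mul_inv, RatFunc.num_div_denom u]
  have hg : gRF x = (u^2 + u + aRF⁻¹^3) + 1 := by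
    rw [gRF, hu]; ring
  have hfb : fRF x * bRF = aRF^4 * (u^2 + u + aRF⁻¹^3) := by
    rw [fRF, hu]
    linear_combination (-((aRF⁻¹^4*bRF^2*x^2 + bRF*x)*(1+(aRF*aRF⁻¹)+(aRF*aRF⁻¹)^2+(aRF*aRF⁻¹)^3)
      + aRF*(1+(aRF*aRF⁻¹)+(aRF*aRF⁻¹)^2))) * haa + aRF * hbb
  have hfg2 : (y^2 + y*z + z^2) * bRF = aRF^4 * (u^2 + u + aRF⁻¹^3) * ((u^2 + u + aRF⁻¹^3) + 1) := by
    calc (y^2 + y*z + z^2) * bRF = (fRF x * bRF) * gRF x := by rw [hxyz]; ring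
    _ = (aRF^4 * (u^2 + u + aRF⁻¹^3)) * ((u^2 + u + aRF⁻¹^3) + 1) := by rw [hfb, hg]
    _ = aRF^4 * (u^2 + u + aRF⁻¹^3) * ((u^2 + u + aRF⁻¹^3) + 1) := by ring
  have hwP : (u^2 + u + aRF⁻¹^3) * (aRF^3*ιs^2) = aRF^3*ιr*(ιr+ιs) + ιs^2 := by
    rw [hu']
    linear_combination (ιr^2*aRF^3*(ιs*ιs⁻¹+1) + ιr*aRF^3*ιs) * hss
      + (ιs^2*((aRF*aRF⁻¹)^2+(aRF*aRF⁻¹)+1)) * haa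
  have hwQ : ((u^2 + u + aRF⁻¹^3) + 1) * (aRF^3*ιs^2)
      = (aRF^3*ιr*(ιr+ιs) + ιs^2) + aRF^3*ιs^2 := by
    linear_combination hwP
  have key : (y^2 + y*z + z^2) * (aRF*bRF*ιs^2)^2
      = bRF * (aRF^3*ιr*(ιr+ιs) + ιs^2) * ((aRF^3*ιr*(ιr+ιs) + ιs^2) + aRF^3*ιs^2) := by
    calc (y^2 + y*z + z^2) * (aRF*bRF*ιs^2)^2
        = ((y^2 + y*z + z^2) * bRF) * (aRF^2*bRF*ιs^4) := by ring
      _ = (aRF^4 * (u^2 + u + aRF⁻¹^3) * ((u^2 + u + aRF⁻¹^3) + 1)) * (aRF^2*bRF*ιs^4) := by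
          rw [hfg2]
      _ = bRF * ((u^2 + u + aRF⁻¹^3) * (aRF^3*ιs^2)) * (((u^2 + u + aRF⁻¹^3) + 1) * (aRF^3*ιs^2)) := by
          ring
      _ = bRF * (aRF^3*ιr*(ιr+ιs) + ιs^2) * ((aRF^3*ιr*(ιr+ιs) + ιs^2) + aRF^3*ιs^2) := by
          rw [hwP, hwQ]
  set Y : RatFunc (ZMod 2) := y * (aRF*bRF*ιs^2) with hY
  set Z : RatFunc (ZMod 2) := z * (aRF*bRF*ιs^2) with hZ
  have hYZ : Y^2 + Y*Z + Z^2
      = bRF * (aRF^3*ιr*(ιr+ιs) + ιs^2) * ((aRF^3*ιr*(ιr+ιs) + ιs^2) + aRF^3*ιs^2) := by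
    rw [hY, hZ, ← key]; ring
  have hYd : algebraMap (Polynomial (ZMod 2)) (RatFunc (ZMod 2)) Y.num
      = Y * algebraMap (Polynomial (ZMod 2)) (RatFunc (ZMod 2)) Y.denom :=
    (div_eq_iff (RatFunc.algebraMap_ne_zero Y.denom_ne_zero)).mp (RatFunc.num_div_denom Y)
  have hZd : algebraMap (Polynomial (ZMod 2)) (RatFunc (ZMod 2)) Z.num
      = Z * algebraMap (Polynomial (ZMod 2)) (RatFunc (ZMod 2)) Z.denom :=
    (div_eq_iff (RatFunc.algebraMap_ne_zero Z.denom_ne_zero)).mp (RatFunc.num_div_denom Z)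
  have hι : algebraMap (Polynomial (ZMod 2)) (RatFunc (ZMod 2))
        ((Y.num*Z.denom)^2 + (Y.num*Z.denom)*(Z.num*Y.denom) + (Z.num*Y.denom)^2)
      = algebraMap (Polynomial (ZMod 2)) (RatFunc (ZMod 2))
        (Polynomial.X * (AP^3*r*(r+s) + s^2) * ((AP^3*r*(r+s) + s^2) + AP^3*s^2)
          * (Y.denom*Z.denom)^2) := by
    simp only [map_add, map_mul, map_pow, map_one]
    rw [hYd, hZd, ← hbRF, ← hιr, ← hιs]
    have hab : (bRF^4 + bRF^3 + 1 : RatFunc (ZMod 2)) = aRF := rfl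
    rw [hab]
    linear_combination ((algebraMap (Polynomial (ZMod 2)) (RatFunc (ZMod 2)) Y.denom)
      * (algebraMap (Polynomial (ZMod 2)) (RatFunc (ZMod 2)) Z.denom))^2 * hYZ
  have heq_poly : (Y.num*Z.denom)^2 + (Y.num*Z.denom)*(Z.num*Y.denom) + (Z.num*Y.denom)^2
      = Polynomial.X * (AP^3*r*(r+s) + s^2) * ((AP^3*r*(r+s) + s^2) + AP^3*s^2)
        * (Y.denom*Z.denom)^2 :=
    RatFunc.algebraMap_injective (ZMod 2) hι
  exact polymain r s hs hco (Y.num*Z.denom) (Z.num*Y.denom) (Y.denom*Z.denom)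
    (mul_ne_zero Y.denom_ne_zero Z.denom_ne_zero) heq_poly
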